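/- Let N be the closed, connected, nonorientable surface of genus 3. Define Z_1 = C = {a_1, a_2, a_3, a_{1,2}, a_{2,3}, a_{3,1}, c_1, c_2, l, w, j} and, for k ≥ 2, Z_k = Z_{k−1} ∪ ⋃_{f ∈ G_3} (f(Z_{k−1}) ∪ f^{−1}(Z_{k−1})), where G_3 = {t_{c_1}, t_{c_2}, y} generates Mod_N. Then each Z_k is a finite superrigid set in C(N), Z_1 ⊂ Z_2 ⊂ ⋯, and ⋃_{k∈ℕ} Z_k = C(N). -/

import Mathlib

/-- Abstract data of the curve complex `C(N)` of a compact, connected, nonorientable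
surface `N` of genus `g` with `n` boundary components, together with the action of the
mapping class group `Mod_N` on it.  `Vertex` is the set of isotopy classes of nontrivial
simple closed curves, `inter` is the geometric intersection number (recall that
`inter v v = 1` iff `v` is one-sided and `inter v v = 0` iff `v` is two-sided), `MCG` is
the mapping class group (isotopy classes of self-homeomorphisms) and `act` is its action
on isotopy classes of curves. -/
structure CurveSystem : Type 1 where
  Vertex : Type
  inter : Vertex → Vertex → ℕ
  inter_symm : ∀ a b, inter a b = inter b a
  MCG : Type
  [grp : Group MCG]
  act : MCG → Vertex → Vertex
  act_one : ∀ v, act 1 v = v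
  act_mul : ∀ f g v, act (f * g) v = act f (act g v)
  act_inter : ∀ f a b, inter (act f a) (act f b) = inter a b

attribute [instance] CurveSystem.grp

namespace CurveSystem

variable (S : CurveSystem)

/-- `l` is a simplicial map on the subcomplex spanned by `A`: simplices map to simplices,
i.e. distinct disjoint vertices are sent to equal or disjoint vertices. -/
def SimplicialOn (A : Set S.Vertex) (l : S.Vertex → S.Vertex) : Prop :=
  ∀ a ∈ A, ∀ b ∈ A, a ≠ b → S.inter a b = 0 → (l a = l b ∨ S.inter (l a) (l b) = 0)

/-- `l` is superinjective on `A`: nonzero geometric intersection is preserved. -/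
def SuperinjectiveOn (A : Set S.Vertex) (l : S.Vertex → S.Vertex) : Prop :=
  ∀ a ∈ A, ∀ b ∈ A, S.inter a b ≠ 0 → S.inter (l a) (l b) ≠ 0

/-- `l` is induced on `A` by a homeomorphism of the surface. -/
def InducedOn (A : Set S.Vertex) (l : S.Vertex → S.Vertex) : Prop :=
  ∃ h : S.MCG, ∀ v ∈ A, S.act h v = l v

/-- `A` is superrigid: every superinjective simplicial map of `A` into the curve
complex is induced by a homeomorphism. -/
def Superrigid (A : Set S.Vertex) : Prop :=
  ∀ l : S.Vertex → S.Vertex, S.SimplicialOn A l → S.SuperinjectiveOn A l → S.InducedOn A l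

/-- The pointwise stabilizer of `A` in the mapping class group is trivial. -/
def TrivialPointwiseStabilizer (A : Set S.Vertex) : Prop :=
  ∀ f : S.MCG, (∀ v ∈ A, S.act f v = v) → f = 1

/-- The star of `v` in `A`: `v` together with the vertices of `A` disjoint from it. -/
def star (A : Set S.Vertex) (v : S.Vertex) : Set S.Vertex :=
  {w | w ∈ A ∧ (w = v ∨ S.inter v w = 0)}

/-- `l` is locally injective on `A`: injective on the star of every vertex. -/
def LocallyInjectiveOn (A : Set S.Vertex) (l : S.Vertex → S.Vertex) : Prop :=
  ∀ v ∈ A, Set.InjOn l (S.star A v)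

/-- `A` is rigid: every locally injective simplicial map of `A` into the curve complex
is induced by a homeomorphism. -/
def Rigid (A : Set S.Vertex) : Prop :=
  ∀ l : S.Vertex → S.Vertex, S.SimplicialOn A l → S.LocallyInjectiveOn A l → S.InducedOn A l

end CurveSystem

namespace CurveSystem

/-- The increasing sequence `Z₁ = C`, `Z_k = Z_{k-1} ∪ ⋃_{f ∈ G} (f(Z_{k-1}) ∪
f⁻¹(Z_{k-1}))` for `k ≥ 2` (indexed here by `k : ℕ` starting at `0`). -/
def Zseq (S : CurveSystem) (C : Set S.Vertex) (G : Set S.MCG) : ℕ → Set S.Vertex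
  | 0 => C
  | k + 1 => Zseq S C G k ∪ ⋃ f ∈ G, (S.act f '' Zseq S C G k ∪ S.act f⁻¹ '' Zseq S C G k)

end CurveSystem

namespace CurveSystem

variable (S : CurveSystem)

lemma act_inv_act' (f : S.MCG) (v : S.Vertex) : S.act f⁻¹ (S.act f v) = v := by
  rw [← S.act_mul, inv_mul_cancel, S.act_one]

lemma act_act_inv' (f : S.MCG) (v : S.Vertex) : S.act f (S.act f⁻¹ v) = v := by
  rw [← S.act_mul, mul_inv_cancel, S.act_one]

lemma act_inj' (f : S.MCG) : Function.Injective (S.act f) := fun a b h => by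
  have h2 := congrArg (S.act f⁻¹) h
  rwa [S.act_inv_act', S.act_inv_act'] at h2

lemma act_fix_zpow {ι : S.MCG} (hιfix : ∀ v, S.act ι v = v) :
    ∀ n : ℤ, ∀ v, S.act (ι ^ n) v = v := by
  have hinv : ∀ v, S.act ι⁻¹ v = v := fun v => by
    calc S.act ι⁻¹ v = S.act ι⁻¹ (S.act ι v) := by rw [hιfix]
    _ = v := S.act_inv_act' ι v
  intro n
  induction n using Int.induction_on with
  | zero => intro v; rw [zpow_zero, S.act_one]
  | succ k ih =>
      intro v
      rw [zpow_add_one, S.act_mul, hιfix, ih]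
  | pred k ih =>
      intro v
      rw [zpow_sub_one, S.act_mul, hinv, ih]

lemma Zseq_succ (C : Set S.Vertex) (G : Set S.MCG) (k : ℕ) :
    Zseq S C G (k + 1) =
      Zseq S C G k ∪ ⋃ f ∈ G, (S.act f '' Zseq S C G k ∪ S.act f⁻¹ '' Zseq S C G k) := rfl

lemma simplicialOn_mono {A B : Set S.Vertex} (h : A ⊆ B) {l : S.Vertex → S.Vertex}
    (hl : S.SimplicialOn B l) : S.SimplicialOn A l :=
  fun a ha b hb => hl a (h ha) b (h hb)

lemma superinjectiveOn_mono {A B : Set S.Vertex} (h : A ⊆ B) {l : S.Vertex → S.Vertex}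
    (hl : S.SuperinjectiveOn B l) : S.SuperinjectiveOn A l :=
  fun a ha b hb => hl a (h ha) b (h hb)

end CurveSystem

/-- Let `N` be the closed, connected, nonorientable surface of genus
3.  Let `C = {a₁, a₂, a₃, a_{1,2}, a_{2,3}, a_{3,1}, c₁, c₂, l, w, j}` be the finite
superrigid set of the paper's Figure 14 (hypothesis `hCsr`), containing a curve of
every topological type (hypothesis `horb`), and let `G₃ = {t_{c₁}, t_{c₂}, y}` be a
generating set of `Mod_N` (hypothesis `hgen`), where `t_{c_i}` are Dehn twists and
`y` is the crosscap slide.  By Stukow's theorem the center of `Mod_N` is generated by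
an involution `ι` fixing every vertex of `C(N)` (hypotheses `hcenter`, `hι2`, `hιfix`),
and for each `f ∈ G₃` there is `L_f ⊆ C` whose pointwise stabilizer equals the center
and with `f(L_f) ⊆ C` (hypothesis `hLf`).  Define `Z₁ = C` and
`Z_k = Z_{k-1} ∪ ⋃_{f ∈ G₃} (f(Z_{k-1}) ∪ f⁻¹(Z_{k-1}))` for `k ≥ 2`.  Then each
`Z_k` is a finite superrigid set in `C(N)`, `Z₁ ⊆ Z₂ ⊆ ⋯`, and `⋃_k Z_k = C(N)`. -/
theorem exhaustion_genus_three_closed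
    (S : CurveSystem)
    (a1 a2 a3 A12 A23 A31 c1 c2 l w j : S.Vertex)
    (tc1 tc2 y ι : S.MCG)
    (C : Set S.Vertex)
    (hC : C = ({a1, a2, a3, A12, A23, A31, c1, c2, l, w, j} : Set S.Vertex))
    (G : Set S.MCG)
    (hG : G = ({tc1, tc2, y} : Set S.MCG))
    (hgen : Subgroup.closure G = ⊤)
    (hcenter : Subgroup.center S.MCG = Subgroup.zpowers ι)
    (hι2 : ι * ι = 1)
    (hιfix : ∀ v : S.Vertex, S.act ι v = v)
    (hCsr : S.Superrigid C)
    (horb : ∀ x : S.Vertex, ∃ f : S.MCG, ∃ v ∈ C, S.act f v = x)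
    (hLf : ∀ f ∈ G, ∃ L : Set S.Vertex, L ⊆ C ∧
      (∀ m : S.MCG, (∀ v ∈ L, S.act m v = v) ↔ m ∈ Subgroup.center S.MCG) ∧
      S.act f '' L ⊆ C) :
    (∀ m : ℕ, (CurveSystem.Zseq S C G m).Finite ∧
      S.Superrigid (CurveSystem.Zseq S C G m)) ∧
    (∀ m : ℕ, CurveSystem.Zseq S C G m ⊆ CurveSystem.Zseq S C G (m + 1)) ∧
    (⋃ m : ℕ, CurveSystem.Zseq S C G m) = Set.univ := by
  classical
  have hGfin : G.Finite := by
    rw [hG]; exact (Set.finite_singleton y).insert tc2 |>.insert tc1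
  have hCfin : C.Finite := by
    rw [hC]
    exact Set.Finite.insert _ (Set.Finite.insert _ (Set.Finite.insert _ (Set.Finite.insert _
      (Set.Finite.insert _ (Set.Finite.insert _ (Set.Finite.insert _ (Set.Finite.insert _
      (Set.Finite.insert _ (Set.Finite.insert _ (Set.finite_singleton _))))))))))
  have hfin : ∀ m, (CurveSystem.Zseq S C G m).Finite := by
    intro m
    induction m with
    | zero => exact hCfin
    | succ k ih =>
        rw [S.Zseq_succ]
        exact ih.union (Set.Finite.biUnion hGfin fun f _ => (ih.image _).union (ih.image _))
  have hmono : ∀ m, CurveSystem.Zseq S C G m ⊆ CurveSystem.Zseq S C G (m + 1) := by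
    intro m
    rw [S.Zseq_succ]
    exact Set.subset_union_left
  have hCsub : ∀ m, C ⊆ CurveSystem.Zseq S C G m := by
    intro m
    induction m with
    | zero => exact subset_rfl
    | succ k ih => exact ih.trans (hmono k)
  -- elements of the center act trivially
  have hactid : ∀ g : S.MCG, g ∈ Subgroup.center S.MCG → ∀ v, S.act g v = v := by
    intro g hg v
    rw [hcenter, Subgroup.mem_zpowers_iff] at hg
    obtain ⟨n, rfl⟩ := hg
    exact S.act_fix_zpow hιfix n v
  -- images of Z_k under generators lie in Z_{k+1}
  have himg1 : ∀ k, ∀ f ∈ G, ∀ v ∈ CurveSystem.Zseq S C G k,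
      S.act f v ∈ CurveSystem.Zseq S C G (k + 1) := by
    intro k f hf v hv
    rw [S.Zseq_succ]
    refine Set.mem_union_right _ ?_
    simp only [Set.mem_iUnion]
    exact ⟨f, hf, Or.inl ⟨v, hv, rfl⟩⟩
  have himg2 : ∀ k, ∀ f ∈ G, ∀ v ∈ CurveSystem.Zseq S C G k,
      S.act f⁻¹ v ∈ CurveSystem.Zseq S C G (k + 1) := by
    intro k f hf v hv
    rw [S.Zseq_succ]
    refine Set.mem_union_right _ ?_
    simp only [Set.mem_iUnion]
    exact ⟨f, hf, Or.inr ⟨v, hv, rfl⟩⟩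
  -- superrigidity of each Z_m
  have hsr : ∀ m, S.Superrigid (CurveSystem.Zseq S C G m) := by
    intro m
    induction m with
    | zero => exact hCsr
    | succ k ih =>
        intro lam hs hsi
        obtain ⟨h, hh⟩ := ih lam (S.simplicialOn_mono (hmono k) hs)
          (S.superinjectiveOn_mono (hmono k) hsi)
        set μ : S.Vertex → S.Vertex := fun v => S.act h⁻¹ (lam v) with hμ
        have hμid : ∀ v ∈ CurveSystem.Zseq S C G k, μ v = v := by
          intro v hv
          show S.act h⁻¹ (lam v) = v
          rw [← hh v hv, S.act_inv_act']
        have hμs : S.SimplicialOn (CurveSystem.Zseq S C G (k + 1)) μ := by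
          intro a ha b hb hne h0
          rcases hs a ha b hb hne h0 with he | h0'
          · exact Or.inl (by show S.act h⁻¹ (lam a) = S.act h⁻¹ (lam b); rw [he])
          · refine Or.inr ?_
            show S.inter (S.act h⁻¹ (lam a)) (S.act h⁻¹ (lam b)) = 0
            rw [S.act_inter]; exact h0'
        have hμsi : S.SuperinjectiveOn (CurveSystem.Zseq S C G (k + 1)) μ := by
          intro a ha b hb hne
          have h1 := hsi a ha b hb hne
          show S.inter (S.act h⁻¹ (lam a)) (S.act h⁻¹ (lam b)) ≠ 0
          rw [S.act_inter]; exact h1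
        -- μ fixes f(Z_k) for each generator f
        have key1 : ∀ f ∈ G, ∀ w ∈ CurveSystem.Zseq S C G k,
            μ (S.act f w) = S.act f w := by
          intro f hf w hw
          obtain ⟨L, hLC, hLstab, hLim⟩ := hLf f hf
          set ν : S.Vertex → S.Vertex := fun v => S.act f⁻¹ (μ (S.act f v)) with hν
          have hνs : S.SimplicialOn (CurveSystem.Zseq S C G k) ν := by
            intro a ha b hb hne h0
            rcases hμs _ (himg1 k f hf a ha) _ (himg1 k f hf b hb)
                (fun e => hne (S.act_inj' f e)) (by rw [S.act_inter]; exact h0) with he | h0'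
            · exact Or.inl (by show S.act f⁻¹ (μ (S.act f a)) = S.act f⁻¹ (μ (S.act f b)); rw [he])
            · refine Or.inr ?_
              show S.inter (S.act f⁻¹ (μ (S.act f a))) (S.act f⁻¹ (μ (S.act f b))) = 0
              rw [S.act_inter]; exact h0'
          have hνsi : S.SuperinjectiveOn (CurveSystem.Zseq S C G k) ν := by
            intro a ha b hb hne
            have h1 := hμsi _ (himg1 k f hf a ha) _ (himg1 k f hf b hb)
              (by rw [S.act_inter]; exact hne)
            show S.inter (S.act f⁻¹ (μ (S.act f a))) (S.act f⁻¹ (μ (S.act f b))) ≠ 0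
            rw [S.act_inter]; exact h1
          obtain ⟨h', hh'⟩ := ih ν hνs hνsi
          have hνL : ∀ v ∈ L, ν v = v := by
            intro v hv
            have h1 : S.act f v ∈ C := hLim ⟨v, hv, rfl⟩
            have h2 : μ (S.act f v) = S.act f v := hμid _ (hCsub k h1)
            show S.act f⁻¹ (μ (S.act f v)) = v
            rw [h2, S.act_inv_act']
          have hcent : h' ∈ Subgroup.center S.MCG := by
            refine (hLstab h').mp ?_
            intro v hv
            rw [hh' v (hCsub k (hLC hv)), hνL v hv]
          have hνw : ν w = w := by
            rw [← hh' w hw, hactid h' hcent]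
          have h3 := congrArg (S.act f) hνw
          show μ (S.act f w) = S.act f w
          calc μ (S.act f w) = S.act f (S.act f⁻¹ (μ (S.act f w))) := (S.act_act_inv' f _).symm
          _ = S.act f w := h3
        -- μ fixes f⁻¹(Z_k) for each generator f
        have key2 : ∀ f ∈ G, ∀ w ∈ CurveSystem.Zseq S C G k,
            μ (S.act f⁻¹ w) = S.act f⁻¹ w := by
          intro f hf w hw
          obtain ⟨L, hLC, hLstab, hLim⟩ := hLf f hf
          set ν : S.Vertex → S.Vertex := fun v => S.act f (μ (S.act f⁻¹ v)) with hν
          have hνs : S.SimplicialOn (CurveSystem.Zseq S C G k) ν := by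
            intro a ha b hb hne h0
            rcases hμs _ (himg2 k f hf a ha) _ (himg2 k f hf b hb)
                (fun e => hne (S.act_inj' f⁻¹ e)) (by rw [S.act_inter]; exact h0) with he | h0'
            · exact Or.inl (by show S.act f (μ (S.act f⁻¹ a)) = S.act f (μ (S.act f⁻¹ b)); rw [he])
            · refine Or.inr ?_
              show S.inter (S.act f (μ (S.act f⁻¹ a))) (S.act f (μ (S.act f⁻¹ b))) = 0
              rw [S.act_inter]; exact h0'
          have hνsi : S.SuperinjectiveOn (CurveSystem.Zseq S C G k) ν := by
            intro a ha b hb hne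
            have h1 := hμsi _ (himg2 k f hf a ha) _ (himg2 k f hf b hb)
              (by rw [S.act_inter]; exact hne)
            show S.inter (S.act f (μ (S.act f⁻¹ a))) (S.act f (μ (S.act f⁻¹ b))) ≠ 0
            rw [S.act_inter]; exact h1
          obtain ⟨h', hh'⟩ := ih ν hνs hνsi
          -- ν fixes f(L) pointwise
          have hνL : ∀ v ∈ L, ν (S.act f v) = S.act f v := by
            intro v hv
            have h2 : μ v = v := hμid _ (hCsub k (hLC hv))
            show S.act f (μ (S.act f⁻¹ (S.act f v))) = S.act f v
            rw [S.act_inv_act', h2]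
          -- hence f⁻¹ h' f is central
          have hcent : f⁻¹ * h' * f ∈ Subgroup.center S.MCG := by
            refine (hLstab _).mp ?_
            intro v hv
            have h1 : S.act f v ∈ C := hLim ⟨v, hv, rfl⟩
            have h2 : S.act h' (S.act f v) = S.act f v := by
              rw [hh' _ (hCsub k h1), hνL v hv]
            rw [S.act_mul, S.act_mul, h2, S.act_inv_act']
          have hid : ∀ v, S.act h' v = v := by
            intro v
            have h1 : h' = f * (f⁻¹ * h' * f) * f⁻¹ := by group
            rw [h1, S.act_mul, S.act_mul, hactid _ hcent, S.act_act_inv']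
          have hνw : ν w = w := by rw [← hh' w hw, hid]
          have h3 := congrArg (S.act f⁻¹) hνw
          show μ (S.act f⁻¹ w) = S.act f⁻¹ w
          calc μ (S.act f⁻¹ w) = S.act f⁻¹ (S.act f (μ (S.act f⁻¹ w))) := (S.act_inv_act' f _).symm
          _ = S.act f⁻¹ w := h3
        refine ⟨h, fun v hv => ?_⟩
        have hμv : μ v = v := by
          rw [S.Zseq_succ] at hv
          rcases hv with hv | hv
          · exact hμid v hv
          · simp only [Set.mem_iUnion] at hv
            obtain ⟨f, hf, hv⟩ := hv
            rcases hv with ⟨u, hu, rfl⟩ | ⟨u, hu, rfl⟩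
            · exact key1 f hf u hu
            · exact key2 f hf u hu
        have h4 := congrArg (S.act h) hμv
        calc S.act h v = S.act h (μ v) := by rw [hμv]
        _ = S.act h (S.act h⁻¹ (lam v)) := rfl
        _ = lam v := S.act_act_inv' h _
  refine ⟨fun m => ⟨hfin m, hsr m⟩, hmono, ?_⟩
  -- exhaustion
  have hQ : ∀ g : S.MCG,
      (∀ m, ∃ m', ∀ v ∈ CurveSystem.Zseq S C G m, S.act g v ∈ CurveSystem.Zseq S C G m') ∧
      (∀ m, ∃ m', ∀ v ∈ CurveSystem.Zseq S C G m, S.act g⁻¹ v ∈ CurveSystem.Zseq S C G m') := by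
    intro g
    have hg : g ∈ Subgroup.closure G := by rw [hgen]; exact Subgroup.mem_top g
    induction hg using Subgroup.closure_induction with
    | mem x hx =>
        exact ⟨fun m => ⟨m + 1, fun v hv => himg1 m x hx v hv⟩,
          fun m => ⟨m + 1, fun v hv => himg2 m x hx v hv⟩⟩
    | one =>
        constructor
        · intro m; exact ⟨m, fun v hv => by rw [S.act_one]; exact hv⟩
        · intro m; exact ⟨m, fun v hv => by rw [inv_one, S.act_one]; exact hv⟩
    | mul x z hx hz ihx ihz =>
        constructor
        · intro m
          obtain ⟨m1, h1⟩ := ihz.1 m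
          obtain ⟨m2, h2⟩ := ihx.1 m1
          exact ⟨m2, fun v hv => by rw [S.act_mul]; exact h2 _ (h1 v hv)⟩
        · intro m
          obtain ⟨m1, h1⟩ := ihx.2 m
          obtain ⟨m2, h2⟩ := ihz.2 m1
          exact ⟨m2, fun v hv => by
            rw [mul_inv_rev, S.act_mul]; exact h2 _ (h1 v hv)⟩
    | inv x hx ihx =>
        refine ⟨ihx.2, ?_⟩
        intro m
        obtain ⟨m', h1⟩ := ihx.1 m
        exact ⟨m', fun v hv => by rw [inv_inv]; exact h1 v hv⟩
  ext x
  simp only [Set.mem_iUnion, Set.mem_univ, iff_true]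
  obtain ⟨f, v, hvC, hfv⟩ := horb x
  obtain ⟨m', h1⟩ := (hQ f).1 0
  exact ⟨m', hfv ▸ h1 v hvC⟩
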